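/- Let 𝐀 = (a_α)_{α<ω₁} be a family of subsets of ω such that a_β ⊄ a_α whenever α < β. Let P_𝐀 be the set of finite subsets p of 𝐀 such that no two distinct members of p are comparable under ⊆, ordered by reverse inclusion. Then for any uncountable family (p_α)_{α<ω₁} of conditions in P_𝐀 that are pairwise disjoint, all of size n, and written p_α = (x_{α,i})_{i<n} respecting the index order of 𝐀, there exist α < β with p_α ∪ p_β ∈ P_𝐀. -/

import Mathlib

noncomputable section

/-- The set of countable ordinals, i.e. ordinals below `ω₁`. -/
abbrev Omega1 : Type 1 := {o : Ordinal // o < (Cardinal.aleph 1).ord}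

namespace Stmt13Aux

open Cardinal Set

lemma ctbl_Iio_ordinal {o : Ordinal.{0}} (ho : o < (Cardinal.aleph 1).ord) :
    (Set.Iio o).Countable := by
  rw [Cardinal.countable_iff_lt_aleph_one, Ordinal.mk_Iio_ordinal]
  have h1 : o.card < Cardinal.aleph 1 := Cardinal.lt_ord.mp ho
  exact (Cardinal.lift_lt.mpr h1).trans_eq (by simp)

lemma ctbl_Iio (δ : Omega1) : (Set.Iio δ : Set Omega1).Countable := by
  have h : (Set.Iio δ : Set Omega1) = Subtype.val ⁻¹' (Set.Iio δ.val) := by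
    ext γ
    simp [Subtype.coe_lt_coe]
  rw [h]
  exact (ctbl_Iio_ordinal δ.2).preimage Subtype.val_injective

lemma ctbl_Iic (δ : Omega1) : (Set.Iic δ : Set Omega1).Countable := by
  have hlim : Order.IsSuccLimit ((Cardinal.aleph 1).ord) :=
    Cardinal.isSuccLimit_ord (Cardinal.aleph0_le_aleph 1)
  have hsucc : Order.succ δ.val < (Cardinal.aleph 1).ord := hlim.succ_lt δ.2
  have h : (Set.Iic δ : Set Omega1) = Subtype.val ⁻¹' (Set.Iio (Order.succ δ.val)) := by
    ext γ
    simp [Order.lt_succ_iff, ← Subtype.coe_le_coe]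
  rw [h]
  exact (ctbl_Iio_ordinal hsucc).preimage Subtype.val_injective

lemma not_ctbl_univ : ¬ (Set.univ : Set Omega1).Countable := by
  rw [Cardinal.countable_iff_lt_aleph_one, Cardinal.mk_univ]
  have h : #Omega1 = Cardinal.lift.{1} ((Cardinal.aleph 1).ord.card) :=
    Ordinal.mk_Iio_ordinal ((Cardinal.aleph 1).ord)
  rw [Cardinal.card_ord] at h
  rw [h]
  simp

section Main

variable {n : ℕ} (A : Omega1 → Set ℕ) (x : Omega1 → Fin n → Omega1)
  (hdisj : ∀ α β : Omega1, α ≠ β → ∀ i j : Fin n, A (x α i) ≠ A (x β j))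

include hdisj in
/-- Given a countable set of countable ordinals, we can find `γ` above all of them whose
condition's indices are also above all the indices of their conditions. -/
lemma fresh (s : Set Omega1) (hs : s.Countable) :
    ∃ γ : Omega1, ∀ β ∈ s, β < γ ∧ ∀ i j : Fin n, x β i < x γ j := by
  have hxinj : ∀ j : Fin n, Function.Injective (fun γ : Omega1 => x γ j) := by
    intro j γ γ' h
    by_contra hne
    exact hdisj γ γ' hne j j (by simp only at h; rw [h])
  set Bad : Set Omega1 :=
    (⋃ β ∈ s, Set.Iic β) ∪
      ⋃ (j : Fin n), (fun γ => x γ j) ⁻¹' (⋃ β ∈ s, ⋃ (i : Fin n), Set.Iic (x β i))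
    with hBadDef
  have hBad : Bad.Countable := by
    apply Set.Countable.union
    · exact hs.biUnion fun β _ => ctbl_Iic β
    · refine Set.countable_iUnion fun j => Set.Countable.preimage ?_ (hxinj j)
      exact hs.biUnion fun β _ => Set.countable_iUnion fun i => ctbl_Iic _
  have hne : Bad ≠ Set.univ := by
    intro h
    exact not_ctbl_univ (h ▸ hBad)
  obtain ⟨γ, hγ⟩ := (Set.ne_univ_iff_exists_notMem _).mp hne
  refine ⟨γ, fun β hβ => ⟨?_, fun i j => ?_⟩⟩
  · by_contra hle
    push_neg at hle
    exact hγ (Or.inl (Set.mem_biUnion hβ hle))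
  · by_contra hle
    push_neg at hle
    refine hγ (Or.inr (Set.mem_iUnion.mpr ⟨j, ?_⟩))
    exact Set.mem_biUnion hβ (Set.mem_iUnion.mpr ⟨i, hle⟩)

include hdisj in
lemma bounding {ι : Type} [Countable ι] (f : ι → Omega1) : ∃ δ : Omega1, ∀ i, f i < δ := by
  obtain ⟨γ, hγ⟩ := fresh A x hdisj (Set.range f) (Set.countable_range f)
  exact ⟨γ, fun i => (hγ (f i) ⟨i, rfl⟩).1⟩

/-- A transfinite sequence of countable ordinals whose conditions have separated index
blocks. -/
def seq : Omega1 → Omega1 :=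
  WellFounded.fix wellFounded_lt fun ξ rec =>
    have : Countable (Set.Iio ξ) := (ctbl_Iio ξ).to_subtype
    (fresh A x hdisj (Set.range fun p : Set.Iio ξ => rec p.1 p.2)
      (Set.countable_range _)).choose

lemma seq_eq (ξ : Omega1) :
    seq A x hdisj ξ =
      (fresh A x hdisj (Set.range fun p : Set.Iio ξ => seq A x hdisj p.1)
        (have : Countable (Set.Iio ξ) := (ctbl_Iio ξ).to_subtype
         Set.countable_range _)).choose := by
  rw [seq, WellFounded.fix_eq]

lemma seq_spec {η ξ : Omega1} (h : η < ξ) :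
    seq A x hdisj η < seq A x hdisj ξ ∧
      ∀ i j : Fin n, x (seq A x hdisj η) i < x (seq A x hdisj ξ) j := by
  have : Countable (Set.Iio ξ) := (ctbl_Iio ξ).to_subtype
  have hspec := (fresh A x hdisj (Set.range fun p : Set.Iio ξ => seq A x hdisj p.1)
      (Set.countable_range _)).choose_spec
  have hres := hspec (seq A x hdisj η) ⟨⟨η, h⟩, rfl⟩
  rwa [← seq_eq A x hdisj ξ] at hres

end Main

end Stmt13Aux

open Stmt13Aux

/-- The forcing `P_𝐀` is ccc: any uncountable family of pairwise disjoint conditions of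
size `n` (enumerated respecting the index order of `𝐀`) contains two compatible ones. -/
theorem stmt13 (A : Omega1 → Set ℕ)
    (hA : ∀ α β : Omega1, α < β → ¬ A β ⊂ A α)
    (n : ℕ) (x : Omega1 → Fin n → Omega1)
    (hmono : ∀ α : Omega1, StrictMono (x α))
    (hdisj : ∀ α β : Omega1, α ≠ β → ∀ i j : Fin n, A (x α i) ≠ A (x β j))
    (hcond : ∀ α : Omega1, ∀ i j : Fin n, i ≠ j →
      ¬ A (x α i) ⊂ A (x α j) ∧ ¬ A (x α j) ⊂ A (x α i)) :
    ∃ α β : Omega1, α < β ∧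
      ∀ i j : Fin n, ¬ A (x α i) ⊂ A (x β j) ∧ ¬ A (x β j) ⊂ A (x α i) := by
  -- If `A u` is a strict subset of `A v` then `u < v`.
  have align : ∀ u v : Omega1, A u ⊂ A v → u < v := by
    intro u v h
    rcases lt_trichotomy u v with hlt | heq | hgt
    · exact hlt
    · rw [heq] at h
      exact ((ssubset_iff_subset_ne.mp h).2 rfl).elim
    · exact absurd h (hA v u hgt)
  by_contra hcon
  have H : ∀ α β : Omega1, α < β →
      ∃ i j : Fin n, A (x α i) ⊂ A (x β j) ∨ A (x β j) ⊂ A (x α i) := by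
    intro α β hlt
    by_contra hno
    push_neg at hno
    exact hcon ⟨α, β, hlt, fun i j => ⟨(hno i j).1, (hno i j).2⟩⟩
  set S : Omega1 → Omega1 := seq A x hdisj with hS
  -- the rectangle sets
  set RR : (Fin n → Fin n → ℕ) → Set Omega1 :=
    fun M => {ξ | ∀ i j : Fin n, M i j ∈ A (x (S ξ) i)} with hRR
  set QQ : (Fin n → Fin n → ℕ) → Set Omega1 :=
    fun M => {ζ | ∀ i j : Fin n, M i j ∉ A (x (S ζ) j)} with hQQ
  -- key bound: a member of `RR M` cannot lie below a member of `QQ M`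
  have key : ∀ (M : Fin n → Fin n → ℕ) (ξ ζ : Omega1),
      ξ ∈ RR M → ζ ∈ QQ M → ξ < ζ → False := by
    intro M ξ ζ hξ hζ hlt
    obtain ⟨i, j, hc⟩ := H (S ξ) (S ζ) (seq_spec A x hdisj hlt).1
    rcases hc with hc | hc
    · exact hζ i j (hc.subset (hξ i j))
    · exact lt_asymm (align _ _ hc) ((seq_spec A x hdisj hlt).2 i j)
  -- a strict bound for chosen members of the nonempty `RR M`
  obtain ⟨θ, hθ⟩ := bounding A x hdisj
    (fun M : {M : Fin n → Fin n → ℕ // (RR M).Nonempty} => M.2.choose)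
  -- pick an index above `θ`
  obtain ⟨ξs, hξs⟩ := fresh A x hdisj {θ} (Set.countable_singleton θ)
  have hθξs : θ < ξs := (hξs θ rfl).1
  -- the pair `(S θ, S ξs)` is incomparable downward, giving a witness matrix
  have hsep : ∀ i j : Fin n, ¬ A (x (S ξs) i) ⊆ A (x (S θ) j) := by
    intro i j hsub
    have hne : S ξs ≠ S θ := ne_of_gt (seq_spec A x hdisj hθξs).1
    have hssub : A (x (S ξs) i) ⊂ A (x (S θ) j) :=
      ssubset_iff_subset_ne.mpr ⟨hsub, hdisj _ _ hne i j⟩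
    exact lt_asymm (align _ _ hssub) ((seq_spec A x hdisj hθξs).2 j i)
  have hwit : ∀ i j : Fin n, ∃ k : ℕ, k ∈ A (x (S ξs) i) ∧ k ∉ A (x (S θ) j) :=
    fun i j => Set.not_subset.mp (hsep i j)
  set M : Fin n → Fin n → ℕ := fun i j => (hwit i j).choose with hM
  have hRRmem : ξs ∈ RR M := fun i j => (hwit i j).choose_spec.1
  have hQQmem : θ ∈ QQ M := fun i j => (hwit i j).choose_spec.2
  have hnon : (RR M).Nonempty := ⟨ξs, hRRmem⟩
  exact key M hnon.choose θ hnon.choose_spec hQQmem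
    (hθ ⟨M, hnon⟩)
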